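/- Consider the SBCM on the path graph P_n with symmetrically placed zealots, and let g(γ) = 2γ(1 − v) − 1 where v = ω(1) = 1/(1 + exp(γ(1 − δ))). Then the harmonic state x̄ is linearly stable if and only if g(γ) < 0, and linearly unstable if and only if g(γ) > 0. -/

import Mathlib

open Finset Filter

namespace SBCM

variable {V : Type*} [Fintype V] [DecidableEq V]

/-- Sigmoidal influence weight. -/
noncomputable def wt (G : SimpleGraph V) [DecidableRel G.Adj] (γ δ : ℝ) (x : V → ℝ)
    (i j : V) : ℝ :=
  if G.Adj i j then 1 / (1 + Real.exp (γ * (x i - x j) ^ 2 - γ * δ)) else 0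

/-- SBCM update operator. -/
noncomputable def F (G : SimpleGraph V) [DecidableRel G.Adj] (Z : Finset V) (γ δ : ℝ)
    (x : V → ℝ) (i : V) : ℝ :=
  if i ∈ Z then 0
  else (∑ j, wt G γ δ x i j * (x j - x i)) / (∑ j, wt G γ δ x i j)

/-- Jacobian block over the persuadable nodes. -/
noncomputable def Jp (G : SimpleGraph V) [DecidableRel G.Adj] (Z : Finset V) (γ δ : ℝ)
    (x : V → ℝ) : Matrix {v : V // v ∉ Z} {v : V // v ∉ Z} ℝ :=
  fun i j => fderiv ℝ (fun y : V → ℝ => F G Z γ δ y i.val) x (Pi.single (j : V) (1 : ℝ))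

/-- `μ` is a (real) eigenvalue of the matrix `M`. -/
def HasEig {n : Type*} [Fintype n] (M : Matrix n n ℝ) (μ : ℝ) : Prop :=
  ∃ φ : n → ℝ, φ ≠ 0 ∧ M.mulVec φ = μ • φ

/-- All eigenvalues of `M` are strictly negative. -/
def LinStable {n : Type*} [Fintype n] (M : Matrix n n ℝ) : Prop :=
  ∀ μ : ℝ, HasEig M μ → μ < 0

/-- `M` has a strictly positive eigenvalue. -/
def LinUnstable {n : Type*} [Fintype n] (M : Matrix n n ℝ) : Prop :=
  ∃ μ : ℝ, 0 < μ ∧ HasEig M μ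

end SBCM

namespace SBCM

/-- The path graph on `n + 2` nodes `0, 1, …, n + 1`. -/
def pathG (n : ℕ) : SimpleGraph (Fin (n + 2)) where
  Adj j k := (j : ℕ) + 1 = (k : ℕ) ∨ (k : ℕ) + 1 = (j : ℕ)
  symm := ⟨fun _ _ h => Or.symm h⟩
  loopless := ⟨fun a h => by rcases h with h | h <;> omega⟩

instance (n : ℕ) : DecidableRel (pathG n).Adj :=
  fun _ _ => inferInstanceAs (Decidable (_ ∨ _))

/-- The zealots of the path graph: the two endpoints. -/
def Zpath (n : ℕ) : Finset (Fin (n + 2)) := {0, Fin.last (n + 1)}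

/-- The harmonic state on the path graph with symmetrically placed zealots:
`x̄_j = −(n+1)/2 + j` (`0`-indexed). -/
noncomputable def xbarPath (n : ℕ) : Fin (n + 2) → ℝ :=
  fun j => -((n : ℝ) + 1) / 2 + (j : ℕ)

end SBCM

namespace SBCMAux
open Matrix Real

noncomputable def Wfun (γ δ t : ℝ) : ℝ := 1 / (1 + Real.exp (γ * t ^ 2 - γ * δ))

noncomputable def Wd (γ δ t : ℝ) : ℝ :=
  -(Real.exp (γ * t ^ 2 - γ * δ) * (γ * (2 * t))) / (1 + Real.exp (γ * t ^ 2 - γ * δ)) ^ 2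

lemma one_add_exp_pos (r : ℝ) : (0:ℝ) < 1 + Real.exp r := by positivity

lemma hasDerivAt_Wfun (γ δ t : ℝ) : HasDerivAt (Wfun γ δ) (Wd γ δ t) t := by
  have h1 : HasDerivAt (fun t : ℝ => γ * t ^ 2 - γ * δ) (γ * (2 * t)) t := by
    have := ((hasDerivAt_pow 2 t).const_mul γ).sub_const (γ * δ)
    simpa [mul_comm] using this
  have h2 := h1.exp
  have h3 := h2.const_add (1 : ℝ)
  have h4 := h3.inv (ne_of_gt (one_add_exp_pos _))
  have : Wfun γ δ = fun t : ℝ => ((fun t => 1 + Real.exp (γ * t ^ 2 - γ * δ)) t)⁻¹ := by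
    funext s; simp [Wfun, one_div]
  rw [this]
  exact h4

lemma mem_Zpath (n : ℕ) (v : Fin (n + 2)) : v ∈ SBCM.Zpath n ↔ (v : ℕ) = 0 ∨ (v : ℕ) = n + 1 := by
  simp only [SBCM.Zpath, Finset.mem_insert, Finset.mem_singleton, Fin.ext_iff, Fin.val_zero, Fin.val_last]

lemma Jp_entry (n : ℕ) (γ δ : ℝ) (i j : {v : Fin (n + 2) // v ∉ SBCM.Zpath n}) :
    SBCM.Jp (SBCM.pathG n) (SBCM.Zpath n) γ δ (SBCM.xbarPath n) i j =
      (2 * γ * (1 - 1 / (1 + Real.exp (γ * (1 - δ)))) - 1) *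
        ((if i = j then (1:ℝ) else 0) -
          ((if (j.1 : ℕ) + 1 = (i.1 : ℕ) then (1:ℝ) else 0) +
           (if (i.1 : ℕ) + 1 = (j.1 : ℕ) then (1:ℝ) else 0)) / 2) := by
  have hiz := i.2
  rw [mem_Zpath] at hiz
  have hib : 1 ≤ (i.1 : ℕ) ∧ (i.1 : ℕ) ≤ n := by
    have := i.1.isLt; omega
  set m : ℕ := (i.1 : ℕ) with hm
  have him : m - 1 < n + 2 := by omega
  have hip : m + 1 < n + 2 := by omega
  set im : Fin (n + 2) := ⟨m - 1, him⟩ with him'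
  set ip : Fin (n + 2) := ⟨m + 1, hip⟩ with hip'
  -- adjacency facts
  have hAdj : ∀ k : Fin (n + 2), (SBCM.pathG n).Adj i.1 k ↔ (k = im ∨ k = ip) := by
    intro k
    show ((i.1:ℕ) + 1 = (k:ℕ) ∨ (k:ℕ) + 1 = (i.1:ℕ)) ↔ _
    constructor
    · rintro (h | h)
      · right; exact Fin.ext (by simpa [hip'] using h.symm)
      · left; exact Fin.ext (by simp only [him']; omega)
    · rintro (rfl | rfl)
      · right; simp only [him']; omega
      · left; simp only [hip']; rfl
  have himip : im ≠ ip := by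
    simp only [him', hip', Fin.ext_iff, ne_eq]; omega
  -- step 1 : rewrite F
  have hFeq : (fun y : Fin (n+2) → ℝ => SBCM.F (SBCM.pathG n) (SBCM.Zpath n) γ δ y i.1) =
      fun y => (Wfun γ δ (y i.1 - y im) * (y im - y i.1) + Wfun γ δ (y i.1 - y ip) * (y ip - y i.1)) *
        ((Wfun γ δ (y i.1 - y im) + Wfun γ δ (y i.1 - y ip)))⁻¹ := by
    funext y
    rw [SBCM.F, if_neg i.2, div_eq_mul_inv]
    have hred : ∀ h : Fin (n+2) → ℝ,
        (∑ k, SBCM.wt (SBCM.pathG n) γ δ y i.1 k * h k) =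
          Wfun γ δ (y i.1 - y im) * h im + Wfun γ δ (y i.1 - y ip) * h ip := by
      intro h
      rw [← Finset.sum_subset (Finset.subset_univ ({im, ip} : Finset (Fin (n+2))))
        (fun k _ hk => ?_), Finset.sum_pair himip]
      · have h1 : (SBCM.pathG n).Adj i.1 im := (hAdj im).2 (Or.inl rfl)
        have h2 : (SBCM.pathG n).Adj i.1 ip := (hAdj ip).2 (Or.inr rfl)
        simp [SBCM.wt, h1, h2, Wfun]
      · have : ¬ (SBCM.pathG n).Adj i.1 k := by
          rw [hAdj]; simpa using hk
        simp [SBCM.wt, this]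
    have h2 := hred (fun _ => 1)
    simp only [mul_one] at h2
    rw [hred (fun k => y k - y i.1), h2]
  -- values at the harmonic state
  set xb := SBCM.xbarPath n with hxb
  have hxim : xb i.1 - xb im = 1 := by
    have h1 : ((m - 1 : ℕ) : ℝ) = (m : ℝ) - 1 := by
      push_cast [Nat.cast_sub hib.1]; ring
    simp only [hxb, SBCM.xbarPath, him', ← hm, Fin.val_mk]
    rw [h1]; ring
  have hxip : xb i.1 - xb ip = -1 := by
    simp only [hxb, SBCM.xbarPath, hip', ← hm, Fin.val_mk]
    push_cast; ring
  have hxmi : xb im - xb i.1 = -1 := by rw [← neg_sub, hxim]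
  have hxpi : xb ip - xb i.1 = 1 := by rw [← neg_sub, hxip]; norm_num
  -- derivative chain
  have hpi := (ContinuousLinearMap.proj (R := ℝ) (φ := fun _ : Fin (n+2) => ℝ) i.1).hasFDerivAt (x := xb)
  have hpim := (ContinuousLinearMap.proj (R := ℝ) (φ := fun _ : Fin (n+2) => ℝ) im).hasFDerivAt (x := xb)
  have hpip := (ContinuousLinearMap.proj (R := ℝ) (φ := fun _ : Fin (n+2) => ℝ) ip).hasFDerivAt (x := xb)
  have hU1 : HasFDerivAt (fun y : Fin (n+2) → ℝ => y i.1 - y im)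
      (ContinuousLinearMap.proj i.1 - ContinuousLinearMap.proj im) xb := hpi.sub hpim
  have hU2 : HasFDerivAt (fun y : Fin (n+2) → ℝ => y i.1 - y ip)
      (ContinuousLinearMap.proj i.1 - ContinuousLinearMap.proj ip) xb := hpi.sub hpip
  have hG1 : HasFDerivAt (fun y : Fin (n+2) → ℝ => y im - y i.1)
      (ContinuousLinearMap.proj im - ContinuousLinearMap.proj i.1) xb := hpim.sub hpi
  have hG2 : HasFDerivAt (fun y : Fin (n+2) → ℝ => y ip - y i.1)
      (ContinuousLinearMap.proj ip - ContinuousLinearMap.proj i.1) xb := hpip.sub hpi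
  have hw1 : HasFDerivAt (fun y : Fin (n+2) → ℝ => Wfun γ δ (y i.1 - y im))
      (Wd γ δ 1 • ((ContinuousLinearMap.proj (R := ℝ) (φ := fun _ : Fin (n+2) => ℝ) i.1) - (ContinuousLinearMap.proj (R := ℝ) (φ := fun _ : Fin (n+2) => ℝ) im))) xb := by
    have := (hasDerivAt_Wfun γ δ (xb i.1 - xb im)).comp_hasFDerivAt xb hU1
    rw [hxim] at this
    exact this
  have hw2 : HasFDerivAt (fun y : Fin (n+2) → ℝ => Wfun γ δ (y i.1 - y ip))
      (Wd γ δ (-1) • ((ContinuousLinearMap.proj (R := ℝ) (φ := fun _ : Fin (n+2) => ℝ) i.1) - (ContinuousLinearMap.proj (R := ℝ) (φ := fun _ : Fin (n+2) => ℝ) ip))) xb := by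
    have := (hasDerivAt_Wfun γ δ (xb i.1 - xb ip)).comp_hasFDerivAt xb hU2
    rw [hxip] at this
    exact this
  have hN := (hw1.mul hG1).add (hw2.mul hG2)
  have hS := hw1.add hw2
  simp only [hxim, hxip, hxmi, hxpi] at hN hS
  -- denominator nonzero
  have hWpos : ∀ t, 0 < Wfun γ δ t := fun t => by
    have := one_add_exp_pos (γ * t ^ 2 - γ * δ); simp only [Wfun]; positivity
  have hS0 : Wfun γ δ 1 + Wfun γ δ (-1) ≠ 0 := by
    have := hWpos 1; have := hWpos (-1); positivity
  have hSval : Wfun γ δ (xb i.1 - xb im) + Wfun γ δ (xb i.1 - xb ip) = Wfun γ δ 1 + Wfun γ δ (-1) := by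
    rw [hxim, hxip]
  have h5 : HasDerivAt (fun t : ℝ => t⁻¹)
      (-((Wfun γ δ 1 + Wfun γ δ (-1)) ^ 2)⁻¹) (Wfun γ δ (xb i.1 - xb im) + Wfun γ δ (xb i.1 - xb ip)) := by
    rw [hSval]; exact hasDerivAt_inv hS0
  have hInv := h5.comp_hasFDerivAt xb hS
  have hF := hN.mul hInv
  have hF2 : HasFDerivAt (fun y : Fin (n+2) → ℝ =>
      (Wfun γ δ (y i.1 - y im) * (y im - y i.1) + Wfun γ δ (y i.1 - y ip) * (y ip - y i.1)) *
        ((Wfun γ δ (y i.1 - y im) + Wfun γ δ (y i.1 - y ip)))⁻¹) _ xb := hF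
  have hgoal : SBCM.Jp (SBCM.pathG n) (SBCM.Zpath n) γ δ xb i j =
      fderiv ℝ (fun y : Fin (n+2) → ℝ => SBCM.F (SBCM.pathG n) (SBCM.Zpath n) γ δ y i.1) xb
        (Pi.single (j.1 : Fin (n+2)) (1:ℝ)) := rfl
  rw [hgoal, hFeq, hF2.fderiv]
  simp only [ContinuousLinearMap.add_apply, ContinuousLinearMap.smul_apply,
    ContinuousLinearMap.sub_apply, ContinuousLinearMap.proj_apply, ContinuousLinearMap.coe_smul',
    Pi.smul_apply, smul_eq_mul, Pi.single_apply, Function.comp_apply, Pi.add_apply, Pi.mul_apply]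
  rw [hxim, hxip, hxmi, hxpi]
  have hWsymm : Wfun γ δ (-1) = Wfun γ δ 1 := by norm_num [Wfun]
  rw [hWsymm]
  -- indicator bookkeeping
  have eb : (if i = j then (1:ℝ) else 0) = (if i.1 = j.1 then (1:ℝ) else 0) := by
    simp [Subtype.ext_iff]
  have ea : (if (j.1 : ℕ) + 1 = m then (1:ℝ) else 0) = (if im = j.1 then (1:ℝ) else 0) := by
    by_cases h : im = j.1
    · rw [if_pos h, if_pos]; rw [← h]; simp only [him', Fin.val_mk]; omega
    · rw [if_neg h, if_neg]; intro hc; exact h (Fin.ext (by simp only [him', Fin.val_mk]; omega))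
  have ec : (if m + 1 = (j.1 : ℕ) then (1:ℝ) else 0) = (if ip = j.1 then (1:ℝ) else 0) := by
    by_cases h : ip = j.1
    · rw [if_pos h, if_pos]; rw [← h]
    · rw [if_neg h, if_neg]; intro hc; exact h (Fin.ext (by simp only [hip', Fin.val_mk]; omega))
  rw [eb, ea, ec]
  generalize (if im = j.1 then (1:ℝ) else 0) = a
  generalize (if i.1 = j.1 then (1:ℝ) else 0) = b
  generalize (if ip = j.1 then (1:ℝ) else 0) = c
  have hgd : γ * (1 - δ) = γ * 1 ^ 2 - γ * δ := by ring
  have hneg : γ * (-1:ℝ) ^ 2 - γ * δ = γ * 1 ^ 2 - γ * δ := by ring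
  rw [hgd]
  simp only [Wfun, Wd, hneg]
  have hE := one_add_exp_pos (γ * 1 ^ 2 - γ * δ)
  have hE' : (1 + rexp (γ * 1 ^ 2 - γ * δ)) ≠ 0 := ne_of_gt hE
  field_simp
  ring

/-- Extension of a vector on persuadable nodes to `ℕ`, zero outside `[1, n]`. -/
noncomputable def Psi (n : ℕ) (φ : {v : Fin (n+2) // v ∉ SBCM.Zpath n} → ℝ) (k : ℕ) : ℝ :=
  if h : 1 ≤ k ∧ k ≤ n then
    φ ⟨⟨k, by omega⟩, by simp only [mem_Zpath, Fin.val_mk]; omega⟩ else 0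

lemma Psi_zero (n : ℕ) (φ : {v : Fin (n+2) // v ∉ SBCM.Zpath n} → ℝ) :
    Psi n φ 0 = 0 := by simp [Psi]

lemma Psi_top (n : ℕ) (φ : {v : Fin (n+2) // v ∉ SBCM.Zpath n} → ℝ) :
    Psi n φ (n+1) = 0 := by simp [Psi]

lemma Pmem_bounds {n : ℕ} (i : {v : Fin (n+2) // v ∉ SBCM.Zpath n}) :
    1 ≤ (i.1 : ℕ) ∧ (i.1 : ℕ) ≤ n := by
  have h := i.2
  simp only [mem_Zpath] at h
  have := i.1.isLt
  omega

lemma Psi_eq (n : ℕ) (φ : {v : Fin (n+2) // v ∉ SBCM.Zpath n} → ℝ)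
    (i : {v : Fin (n+2) // v ∉ SBCM.Zpath n}) : Psi n φ (i.1 : ℕ) = φ i := by
  rw [Psi, dif_pos (Pmem_bounds i)]

lemma sum_ind (n : ℕ) (φ : {v : Fin (n+2) // v ∉ SBCM.Zpath n} → ℝ) (k : ℕ) :
    ∑ j : {v : Fin (n+2) // v ∉ SBCM.Zpath n}, (if (j.1 : ℕ) = k then (1:ℝ) else 0) * φ j
      = Psi n φ k := by
  by_cases h : 1 ≤ k ∧ k ≤ n
  · set j0 : {v : Fin (n+2) // v ∉ SBCM.Zpath n} :=
      ⟨⟨k, by omega⟩, by simp only [mem_Zpath, Fin.val_mk]; omega⟩ with hj0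
    rw [Finset.sum_eq_single j0]
    · rw [if_pos (by simp [hj0]), one_mul, Psi, dif_pos h]
    · intro j _ hne
      rw [if_neg, zero_mul]
      intro hc
      exact hne (Subtype.ext (Fin.ext (by simp [hc, hj0])))
    · intro hc; exact absurd (Finset.mem_univ _) hc
  · rw [Psi, dif_neg h, Finset.sum_eq_zero]
    intro j _
    have hb := Pmem_bounds j
    rw [if_neg (by omega), zero_mul]

lemma mulVec_Jp (n : ℕ) (γ δ : ℝ) (φ : {v : Fin (n+2) // v ∉ SBCM.Zpath n} → ℝ)
    (i : {v : Fin (n+2) // v ∉ SBCM.Zpath n}) :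
    (SBCM.Jp (SBCM.pathG n) (SBCM.Zpath n) γ δ (SBCM.xbarPath n)).mulVec φ i =
      (2 * γ * (1 - 1 / (1 + Real.exp (γ * (1 - δ)))) - 1) *
        (Psi n φ (i.1 : ℕ) - (Psi n φ ((i.1 : ℕ) - 1) + Psi n φ ((i.1 : ℕ) + 1)) / 2) := by
  set g := 2 * γ * (1 - 1 / (1 + Real.exp (γ * (1 - δ)))) - 1 with hg
  have hb := Pmem_bounds i
  have hstep : ∀ j : {v : Fin (n+2) // v ∉ SBCM.Zpath n},
      SBCM.Jp (SBCM.pathG n) (SBCM.Zpath n) γ δ (SBCM.xbarPath n) i j * φ j =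
        g * ((if (j.1 : ℕ) = (i.1 : ℕ) then (1:ℝ) else 0) * φ j)
          - (g/2) * ((if (j.1 : ℕ) = (i.1 : ℕ) - 1 then (1:ℝ) else 0) * φ j)
          - (g/2) * ((if (j.1 : ℕ) = (i.1 : ℕ) + 1 then (1:ℝ) else 0) * φ j) := by
    intro j
    rw [Jp_entry n γ δ i j]
    have e1 : (if i = j then (1:ℝ) else 0) = (if (j.1 : ℕ) = (i.1 : ℕ) then (1:ℝ) else 0) := by
      by_cases h : i = j
      · rw [if_pos h, if_pos (by rw [h])]
      · rw [if_neg h, if_neg (fun hc => h (Subtype.ext (Fin.ext hc.symm)))]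
    have e2 : (if (j.1 : ℕ) + 1 = (i.1 : ℕ) then (1:ℝ) else 0)
        = (if (j.1 : ℕ) = (i.1 : ℕ) - 1 then (1:ℝ) else 0) := by
      have hbj := Pmem_bounds j
      by_cases h : (j.1 : ℕ) + 1 = (i.1 : ℕ)
      · rw [if_pos h, if_pos (by omega)]
      · rw [if_neg h, if_neg (by omega)]
    have e3 : (if (i.1 : ℕ) + 1 = (j.1 : ℕ) then (1:ℝ) else 0)
        = (if (j.1 : ℕ) = (i.1 : ℕ) + 1 then (1:ℝ) else 0) := by
      by_cases h : (i.1 : ℕ) + 1 = (j.1 : ℕ)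
      · rw [if_pos h, if_pos (by omega)]
      · rw [if_neg h, if_neg (by omega)]
    rw [e1, e2, e3]; ring
  rw [Matrix.mulVec, dotProduct]
  calc (∑ j, SBCM.Jp (SBCM.pathG n) (SBCM.Zpath n) γ δ (SBCM.xbarPath n) i j * φ j)
      = ∑ j : {v : Fin (n+2) // v ∉ SBCM.Zpath n},
          (g * ((if (j.1 : ℕ) = (i.1 : ℕ) then (1:ℝ) else 0) * φ j)
          - (g/2) * ((if (j.1 : ℕ) = (i.1 : ℕ) - 1 then (1:ℝ) else 0) * φ j)
          - (g/2) * ((if (j.1 : ℕ) = (i.1 : ℕ) + 1 then (1:ℝ) else 0) * φ j)) :=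
        Finset.sum_congr rfl (fun j _ => hstep j)
    _ = g * (∑ j : {v : Fin (n+2) // v ∉ SBCM.Zpath n}, (if (j.1 : ℕ) = (i.1 : ℕ) then (1:ℝ) else 0) * φ j)
          - (g/2) * (∑ j : {v : Fin (n+2) // v ∉ SBCM.Zpath n}, (if (j.1 : ℕ) = (i.1 : ℕ) - 1 then (1:ℝ) else 0) * φ j)
          - (g/2) * (∑ j : {v : Fin (n+2) // v ∉ SBCM.Zpath n}, (if (j.1 : ℕ) = (i.1 : ℕ) + 1 then (1:ℝ) else 0) * φ j) := by
        rw [Finset.sum_sub_distrib, Finset.sum_sub_distrib, ← Finset.mul_sum, ← Finset.mul_sum, ← Finset.mul_sum]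
    _ = g * Psi n φ (i.1 : ℕ) - (g/2) * Psi n φ ((i.1 : ℕ) - 1) - (g/2) * Psi n φ ((i.1 : ℕ) + 1) := by
        rw [sum_ind, sum_ind, sum_ind]
    _ = g * (Psi n φ (i.1 : ℕ) - (Psi n φ ((i.1 : ℕ) - 1) + Psi n φ ((i.1 : ℕ) + 1)) / 2) := by ring

/-- Reindexing equivalence. -/
def eP (n : ℕ) : Fin n ≃ {v : Fin (n+2) // v ∉ SBCM.Zpath n} where
  toFun k := ⟨⟨(k : ℕ) + 1, by omega⟩, by simp only [mem_Zpath, Fin.val_mk]; omega⟩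
  invFun i := ⟨(i.1 : ℕ) - 1, by have := Pmem_bounds i; omega⟩
  left_inv k := by ext; simp
  right_inv i := by
    have := Pmem_bounds i
    exact Subtype.ext (Fin.ext (by simp; omega))

lemma sum_shift (Ψ : ℕ → ℝ) (N : ℕ) :
    ∑ k ∈ Finset.range N, Ψ (k+1) * (Ψ (k+1) - (Ψ k + Ψ (k+2)) / 2)
      = (1/2) * ∑ k ∈ Finset.range (N+1), (Ψ k - Ψ (k+1))^2
        + (Ψ 0 * Ψ 1 - Ψ 0 ^ 2 + Ψ N * Ψ (N+1) - Ψ (N+1)^2) / 2 := by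
  induction N with
  | zero => simp [Finset.sum_range_one]; ring
  | succ N ih =>
    rw [Finset.sum_range_succ, ih, Finset.sum_range_succ (n := N + 1)]
    ring

lemma dot_formula (n : ℕ) (γ δ : ℝ) (φ : {v : Fin (n+2) // v ∉ SBCM.Zpath n} → ℝ) :
    φ ⬝ᵥ (SBCM.Jp (SBCM.pathG n) (SBCM.Zpath n) γ δ (SBCM.xbarPath n)).mulVec φ =
      (2 * γ * (1 - 1 / (1 + Real.exp (γ * (1 - δ)))) - 1) *
        ((1/2) * ∑ k ∈ Finset.range (n+1), (Psi n φ k - Psi n φ (k+1))^2) := by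
  set g := 2 * γ * (1 - 1 / (1 + Real.exp (γ * (1 - δ)))) - 1 with hg
  rw [dotProduct]
  have h1 : ∀ i : {v : Fin (n+2) // v ∉ SBCM.Zpath n},
      φ i * (SBCM.Jp (SBCM.pathG n) (SBCM.Zpath n) γ δ (SBCM.xbarPath n)).mulVec φ i
        = g * (Psi n φ (i.1 : ℕ) * (Psi n φ (i.1 : ℕ)
            - (Psi n φ ((i.1 : ℕ) - 1) + Psi n φ ((i.1 : ℕ) + 1)) / 2)) := by
    intro i
    rw [mulVec_Jp, ← Psi_eq n φ i]; ring
  rw [Finset.sum_congr rfl (fun i _ => h1 i), ← Finset.mul_sum]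
  congr 1
  rw [← Equiv.sum_comp (eP n)
    (fun i => Psi n φ (i.1 : ℕ) * (Psi n φ (i.1 : ℕ)
      - (Psi n φ ((i.1 : ℕ) - 1) + Psi n φ ((i.1 : ℕ) + 1)) / 2))]
  have h2 : ∀ k : Fin n, ((eP n k).1 : ℕ) = (k : ℕ) + 1 := fun k => rfl
  simp only [h2]
  have h3 : ∀ k : Fin n, (k : ℕ) + 1 - 1 = (k : ℕ) := fun k => rfl
  simp only [h3]
  rw [Fin.sum_univ_eq_sum_range (fun k => Psi n φ (k+1) * (Psi n φ (k+1)
      - (Psi n φ k + Psi n φ (k+1+1)) / 2))]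
  have := sum_shift (Psi n φ) n
  rw [Psi_zero, Psi_top] at this
  simpa using this

lemma Q_pos (n : ℕ) (φ : {v : Fin (n+2) // v ∉ SBCM.Zpath n} → ℝ) (hφ : φ ≠ 0) :
    0 < ∑ k ∈ Finset.range (n+1), (Psi n φ k - Psi n φ (k+1))^2 := by
  rcases (Finset.sum_nonneg (fun k _ => sq_nonneg (Psi n φ k - Psi n φ (k+1)))).lt_or_eq with h | h
  · exact h
  exfalso
  apply hφ
  have hz := (Finset.sum_eq_zero_iff_of_nonneg
    (fun k _ => sq_nonneg (Psi n φ k - Psi n φ (k+1)))).1 h.symm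
  have hstep : ∀ k, k ≤ n → Psi n φ (k+1) = Psi n φ k := by
    intro k hk
    have := hz k (Finset.mem_range.2 (by omega))
    have := pow_eq_zero_iff (n := 2) (by norm_num) |>.1 this
    linarith [this]
  have hall : ∀ k, k ≤ n + 1 → Psi n φ k = 0 := by
    intro k
    induction k with
    | zero => intro _; exact Psi_zero n φ
    | succ k ih => intro hk; rw [hstep k (by omega), ih (by omega)]
  funext i
  have hb := Pmem_bounds i
  rw [← Psi_eq n φ i, hall _ (by omega)]
  rfl

/-- The matrix `I - A/2` on the persuadable nodes. -/
noncomputable def Mmat (n : ℕ) :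
    Matrix {v : Fin (n+2) // v ∉ SBCM.Zpath n} {v : Fin (n+2) // v ∉ SBCM.Zpath n} ℝ :=
  fun i j => (if i = j then (1:ℝ) else 0) -
    ((if (j.1 : ℕ) + 1 = (i.1 : ℕ) then (1:ℝ) else 0) +
     (if (i.1 : ℕ) + 1 = (j.1 : ℕ) then (1:ℝ) else 0)) / 2

lemma Jp_eq_smul (n : ℕ) (γ δ : ℝ) :
    SBCM.Jp (SBCM.pathG n) (SBCM.Zpath n) γ δ (SBCM.xbarPath n) =
      (2 * γ * (1 - 1 / (1 + Real.exp (γ * (1 - δ)))) - 1) • Mmat n := by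
  ext i j
  rw [Matrix.smul_apply, Jp_entry n γ δ i j, smul_eq_mul, Mmat]

lemma Mmat_herm (n : ℕ) : (Mmat n).IsHermitian := by
  rw [Matrix.IsHermitian]
  ext i j
  rw [Matrix.conjTranspose_apply, Mmat]
  simp only [Mmat, star_trivial]
  rw [if_congr (Iff.intro Eq.symm Eq.symm : (j = i) ↔ (i = j)) rfl rfl]
  ring

lemma main_result (n : ℕ) (hn : 1 ≤ n) (γ δ : ℝ) :
    (SBCM.LinStable (SBCM.Jp (SBCM.pathG n) (SBCM.Zpath n) γ δ (SBCM.xbarPath n)) ↔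
      2 * γ * (1 - 1 / (1 + Real.exp (γ * (1 - δ)))) - 1 < 0) ∧
    (SBCM.LinUnstable (SBCM.Jp (SBCM.pathG n) (SBCM.Zpath n) γ δ (SBCM.xbarPath n)) ↔
      0 < 2 * γ * (1 - 1 / (1 + Real.exp (γ * (1 - δ)))) - 1) := by
  set g := 2 * γ * (1 - 1 / (1 + Real.exp (γ * (1 - δ)))) - 1 with hg
  set J := SBCM.Jp (SBCM.pathG n) (SBCM.Zpath n) γ δ (SBCM.xbarPath n) with hJ
  have hne : Nonempty {v : Fin (n+2) // v ∉ SBCM.Zpath n} :=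
    ⟨⟨⟨1, by omega⟩, by simp only [mem_Zpath, Fin.val_mk]; omega⟩⟩
  have hsq : ∀ φ : {v : Fin (n+2) // v ∉ SBCM.Zpath n} → ℝ, φ ≠ 0 →
      0 < dotProduct φ φ := by
    intro φ hφ
    obtain ⟨i0, hi0⟩ := Function.ne_iff.1 hφ
    exact Finset.sum_pos' (fun i _ => mul_self_nonneg _)
      ⟨i0, Finset.mem_univ _, mul_self_pos.2 (by simpa using hi0)⟩
  -- sign of any eigenvalue
  have hsign : ∀ μ : ℝ, SBCM.HasEig J μ → ∃ q > 0, ∃ s > 0, μ * s = g * q := by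
    rintro μ ⟨φ, hφ, heig⟩
    refine ⟨(1/2) * ∑ k ∈ Finset.range (n+1), (Psi n φ k - Psi n φ (k+1))^2,
      by have := Q_pos n φ hφ; positivity, dotProduct φ φ, hsq φ hφ, ?_⟩
    have h1 := dot_formula n γ δ φ
    rw [← hJ, ← hg, heig, dotProduct_smul, smul_eq_mul] at h1
    exact h1
  -- existence of an eigenvalue of definite sign when g ≠ 0
  have hexists : g ≠ 0 → ∃ lam > 0, SBCM.HasEig J (g * lam) := by
    intro hg0
    have hM := Mmat_herm n
    obtain ⟨i0⟩ := hne
    set φ0 := (WithLp.equiv 2 _) (hM.eigenvectorBasis i0) with hφ0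
    have hvec := hM.mulVec_eigenvectorBasis i0
    have hφ0ne : φ0 ≠ 0 := by
      intro h
      have h2 : hM.eigenvectorBasis i0 = 0 := by
        exact (WithLp.equiv 2 _).injective (by rw [← hφ0, h]; rfl)
      exact hM.eigenvectorBasis.toBasis.ne_zero i0 (by simpa using h2)
    set lam := hM.eigenvalues i0 with hlam'
    have heig : J.mulVec φ0 = (g * lam) • φ0 := by
      rw [hJ, Jp_eq_smul n γ δ, ← hg, Matrix.smul_mulVec, (show (Mmat n).mulVec φ0 = lam • φ0 from hvec), smul_smul]
    have hEig : SBCM.HasEig J (g * lam) := ⟨φ0, hφ0ne, heig⟩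
    obtain ⟨q, hq, s, hs, heq⟩ := hsign _ hEig
    have hlam : 0 < lam := by
      have h2 : g * (lam * s) = g * q := by linarith [heq]
      have h3 : lam * s = q := mul_left_cancel₀ hg0 h2
      nlinarith
    exact ⟨lam, hlam, hEig⟩
  constructor
  · constructor
    · intro hst
      by_contra hc
      push_neg at hc
      rcases eq_or_lt_of_le hc with h0 | h0
      · -- g = 0 : the zero matrix has eigenvalue 0
        obtain ⟨i0⟩ := hne
        have hEig : SBCM.HasEig J 0 := by
          refine ⟨fun _ => 1, ?_, ?_⟩
          · intro h; exact one_ne_zero (congrFun h i0)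
          · rw [hJ, Jp_eq_smul n γ δ, ← hg, ← h0]
            funext i
            simp [Matrix.mulVec, dotProduct]
        exact absurd (hst 0 hEig) (lt_irrefl 0)
      · obtain ⟨lam, hlam, hEig⟩ := hexists (ne_of_gt h0)
        have := hst _ hEig
        nlinarith
    · intro hgneg μ hμ
      obtain ⟨q, hq, s, hs, heq⟩ := hsign μ hμ
      nlinarith
  · constructor
    · rintro ⟨μ, hμpos, hμ⟩
      obtain ⟨q, hq, s, hs, heq⟩ := hsign μ hμ
      nlinarith
    · intro hgpos
      obtain ⟨lam, hlam, hEig⟩ := hexists (ne_of_gt hgpos)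
      exact ⟨g * lam, mul_pos hgpos hlam, hEig⟩

end SBCMAux

/-- On the path graph `P_n`, with `g(γ) = 2γ(1 − v) − 1` and
`v = 1/(1 + exp(γ(1 − δ)))`, the harmonic state is linearly stable iff `g(γ) < 0`
and linearly unstable iff `g(γ) > 0`. -/
theorem stmt_12 (n : ℕ) (hn : 1 ≤ n) (γ δ : ℝ) (hγ : 0 ≤ γ) (hδ : 0 ≤ δ) :
    (SBCM.LinStable (SBCM.Jp (SBCM.pathG n) (SBCM.Zpath n) γ δ (SBCM.xbarPath n)) ↔
      2 * γ * (1 - 1 / (1 + Real.exp (γ * (1 - δ)))) - 1 < 0) ∧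
    (SBCM.LinUnstable (SBCM.Jp (SBCM.pathG n) (SBCM.Zpath n) γ δ (SBCM.xbarPath n)) ↔
      0 < 2 * γ * (1 - 1 / (1 + Real.exp (γ * (1 - δ)))) - 1) :=
  SBCMAux.main_result n hn γ δ
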